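/- For a natural number m ≥ 0, there exist k ≥ 1 and natural numbers 0 ≤ n_1 ≤ n_2 ≤ ... ≤ n_k such that F_{n_1}·F_{n_2}·...·F_{n_k} − 1 = L_m^2 if and only if m = 1 or m is even. -/

import Mathlib

open Nat

def lucas : ℕ → ℕ
  | 0 => 2
  | 1 => 1
  | n + 2 => lucas (n + 1) + lucas n

lemma lucas_add_two (n : ℕ) : lucas (n + 2) = lucas (n + 1) + lucas n := rfl

lemma lucas_pos (n : ℕ) : 0 < lucas n := by
  induction n using Nat.twoStepInduction with
  | zero => decide
  | one => decide
  | more n ih _ => rw [lucas_add_two]; omega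

lemma fibZ (n : ℕ) : (fib (n + 2) : ℤ) = fib n + fib (n + 1) := by
  push_cast [fib_add_two]; ring

-- I2
lemma lucasZ (n : ℕ) : (lucas n : ℤ) = 2 * fib (n + 1) - fib n := by
  induction n using Nat.twoStepInduction with
  | zero => decide
  | one => decide
  | more n ih1 ih2 =>
    rw [lucas_add_two]
    push_cast
    linear_combination ih1 + ih2 - 2 * fibZ (n + 1) + fibZ n

-- I1
lemma fibId (n : ℕ) : (fib (n+1) : ℤ)^2 - fib (n+1) * fib n - (fib n : ℤ)^2 = (-1)^n := by
  induction n with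
  | zero => decide
  | succ n ih => linear_combination (-1 : ℤ) * ih + ((fib (n+2) : ℤ) + fib n) * fibZ n

-- I3
lemma fibI3 (n : ℕ) : (fib (2*n+1) : ℤ) = (fib n : ℤ)^2 + (fib (n+1) : ℤ)^2 := by
  have := fib_add n n
  rw [show n + n + 1 = 2*n+1 by ring] at this
  push_cast [this]; ring

-- I4
lemma fibI4 (n : ℕ) : (fib (2*n) : ℤ) = 2 * fib n * fib (n+1) - (fib n : ℤ)^2 := by
  have h := fib_add n (n+1)
  rw [show n + (n+1) + 1 = 2*n+2 by ring] at h
  have h1 : (fib (2*n+2) : ℤ) = fib (2*n) + fib (2*n+1) := fibZ _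
  have h3 := fibI3 n
  have h2 : (fib (2*n+2) : ℤ) = fib n * fib (n+1) + fib (n+1) * fib (n+2) := by
    exact_mod_cast congrArg (Nat.cast : ℕ → ℤ) h
  linear_combination h2 - h1 - h3 + ((fib (n+1)) : ℤ) * fibZ n

-- L5
lemma lucas_sq (n : ℕ) : (lucas n : ℤ)^2 = 5 * (fib n : ℤ)^2 + 4 * (-1)^n := by
  have h := lucasZ n
  linear_combination ((lucas n : ℤ) + 2 * (fib (n+1):ℤ) - (fib n : ℤ)) * h + 4 * fibId n

-- L6
lemma lucas_two_mul (n : ℕ) : (lucas (2*n) : ℤ) = (lucas n : ℤ)^2 - 2 * (-1)^n := by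
  have h := lucasZ (2*n)
  rw [show 2*n+1 = 2*n+1 from rfl] at h
  have h1 : (fib (2*n+1) : ℤ) = (fib n : ℤ)^2 + (fib (n+1) : ℤ)^2 := fibI3 n
  have h2 := fibI4 n
  have h3 := lucas_sq n
  have h4 := fibId n
  linear_combination h + 2*h1 - h2 - h3 + 2*h4
lemma lucas_add_four (n : ℕ) : lucas (n + 4) = 3 * lucas (n + 1) + 2 * lucas n := by
  rw [show n+4 = n+2+2 by ring, lucas_add_two, show n+3 = n+1+2 by ring,
    lucas_add_two, lucas_add_two]
  ring

lemma lucas_sq_mod_three (t : ℕ) : lucas (2*t+1) ^ 2 % 3 = 1 := by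
  induction t using Nat.twoStepInduction with
  | zero => decide
  | one => decide
  | more t ih _ =>
    have h : lucas (2*(t+2)+1) = 3 * lucas (2*t+2) + 2 * lucas (2*t+1) := by
      rw [show 2*(t+2)+1 = (2*t+1)+4 by ring, lucas_add_four]
    have hexp : (3 * lucas (2*t+2) + 2 * lucas (2*t+1))^2
        = 3 * (3 * lucas (2*t+2)^2 + 4 * lucas (2*t+2) * lucas (2*t+1) + lucas (2*t+1)^2)
          + lucas (2*t+1)^2 := by ring
    rw [h, hexp]
    omega

lemma not_three_dvd_N {m : ℕ} (hm : Odd m) : ¬ (3 ∣ lucas m ^ 2 + 1) := by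
  obtain ⟨t, rfl⟩ := hm
  have := lucas_sq_mod_three t
  omega

lemma not_four_dvd_N (m : ℕ) : ¬ (4 ∣ lucas m ^ 2 + 1) := by
  rcases Nat.even_or_odd (lucas m) with ⟨y, hy⟩ | ⟨y, hy⟩ <;> rw [hy]
  · have : (y + y)^2 = 4*y^2 := by ring
    omega
  · have : (2*y+1)^2 = 4*(y^2+y)+1 := by ring
    omega

lemma fib_odd_aux (q : ℕ) : fib (3*q+1) % 2 = 1 ∧ fib (3*q+2) % 2 = 1 := by
  induction q with
  | zero => decide
  | succ q ih =>
    have e1 : fib (3*q+3) = fib (3*q+1) + fib (3*q+2) := by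
      rw [show 3*q+3 = 3*q+1+2 by ring]; exact fib_add_two
    have e2 : fib (3*q+4) = fib (3*q+2) + fib (3*q+3) := by
      rw [show 3*q+4 = 3*q+2+2 by ring]; exact fib_add_two
    have e3 : fib (3*q+5) = fib (3*q+3) + fib (3*q+4) := by
      rw [show 3*q+5 = 3*q+3+2 by ring]; exact fib_add_two
    constructor
    · rw [show 3*(q+1)+1 = 3*q+4 by ring]; omega
    · rw [show 3*(q+1)+2 = 3*q+5 by ring]; omega

lemma two_dvd_fib_iff (n : ℕ) : 2 ∣ fib n ↔ 3 ∣ n := by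
  constructor
  · intro h
    by_contra h3
    have h1 : n = 3*(n/3) + n % 3 := (Nat.div_add_mod n 3).symm
    have h2 : n % 3 = 1 ∨ n % 3 = 2 := by omega
    have := fib_odd_aux (n/3)
    rcases h2 with h2 | h2 <;> rw [h1, h2] at h <;> omega
  · intro h
    simpa [show fib 3 = 2 from rfl] using Nat.fib_dvd 3 n h

lemma lucas_fib (n : ℕ) : (lucas (n+1) : ℤ) = fib n + fib (n+2) := by
  rw [lucasZ]
  linear_combination fibZ n

lemma sandwich1 {m : ℕ} (hm : 2 ≤ m) : fib (2*m+1) ≤ lucas m ^ 2 := by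
  have key : (lucas m : ℤ)^2 - fib (2*m+1) = (fib (m+1) : ℤ) * (3 * fib (m+1) - 4 * fib m) := by
    have h3 := fibI3 m
    have h := lucasZ m
    linear_combination -h3 + ((lucas m : ℤ) + 2*(fib (m+1):ℤ) - fib m) * h
  have hge : 4 * fib m ≤ 3 * fib (m+1) := by
    obtain ⟨k, rfl⟩ : ∃ k, m = k + 2 := ⟨m - 2, by omega⟩
    show 4 * fib (k+2) ≤ 3 * fib (k+3)
    have h1 : fib (k+3) = fib (k+1) + fib (k+2) := by
      rw [show k+3 = k+1+2 by ring]; exact fib_add_two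
    have h2 : fib (k+2) = fib k + fib (k+1) := fib_add_two
    have h4 : fib k ≤ fib (k+1) := fib_le_fib_succ
    omega
  have h0 : (0 : ℤ) ≤ (fib (m+1) : ℤ) * (3 * fib (m+1) - 4 * fib m) := by
    apply mul_nonneg (by positivity)
    have : ((4 * fib m : ℕ) : ℤ) ≤ ((3 * fib (m+1) : ℕ) : ℤ) := by exact_mod_cast hge
    push_cast at this
    linarith
  have : (fib (2*m+1) : ℤ) ≤ (lucas m : ℤ)^2 := by linarith [key, h0]
  exact_mod_cast this

lemma sandwich2 {m : ℕ} (hm : 3 ≤ m) : lucas m ^ 2 + 1 < fib (2*m+2) := by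
  obtain ⟨k, rfl⟩ : ∃ k, m = k + 3 := ⟨m - 3, by omega⟩
  have t1 : (fib (2*(k+3)+2) : ℤ)
      = 2*(fib (k+3):ℤ)*(fib (k+3+1):ℤ) + (fib (k+3+1):ℤ)^2 := by
    have h2 := fibZ (2*(k+3))
    have h3 := fibI3 (k+3)
    have h4 := fibI4 (k+3)
    linear_combination h2 + h3 + h4
  have t2 := lucasZ (k+3)
  have hA : (fib (k+3) : ℤ) = (fib (k+1) : ℤ) + (fib (k+2) : ℤ) := by
    rw [show k+3 = k+1+2 by ring]; push_cast [fib_add_two]; ring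
  have hB : (fib (k+3+1) : ℤ) = (fib (k+2) : ℤ) + ((fib (k+1) : ℤ) + (fib (k+2) : ℤ)) := by
    rw [← hA, show k+3+1 = k+2+2 by ring]; push_cast [fib_add_two]; ring
  have ha : 1 ≤ (fib (k+2) : ℤ) := by exact_mod_cast Nat.one_le_iff_ne_zero.2 (by simp [Nat.fib_eq_zero])
  have hb : 1 ≤ (fib (k+1) : ℤ) := by exact_mod_cast Nat.one_le_iff_ne_zero.2 (by simp [Nat.fib_eq_zero])
  have hab : (fib (k+2) : ℤ) ≤ 2 * (fib (k+1) : ℤ) := by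
    have h2 : fib (k+2) = fib k + fib (k+1) := fib_add_two
    have h4 : fib k ≤ fib (k+1) := fib_le_fib_succ
    have : fib (k+2) ≤ 2 * fib (k+1) := by omega
    exact_mod_cast this
  have key : (lucas (k+3) : ℤ)^2 + 1 < fib (2*(k+3)+2) := by
    rw [t1, t2, hB, hA]
    nlinarith [ha, hb, hab]
  exact_mod_cast key
section KeyLemma

open Matrix

def Qm (p : ℕ) : Matrix (Fin 2) (Fin 2) (ZMod p) := !![1, 1; 1, 0]

lemma Qm_pow (p : ℕ) (n : ℕ) :
    (Qm p)^(n+1) = !![((fib (n+2) : ℕ) : ZMod p), ((fib (n+1) : ℕ) : ZMod p);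
      ((fib (n+1) : ℕ) : ZMod p), ((fib n : ℕ) : ZMod p)] := by
  induction n with
  | zero => simp [Qm]
  | succ n ih =>
    rw [pow_succ, ih]
    rw [show Qm p = !![1,1;1,0] from rfl, Matrix.mul_fin_two]
    have e1 : fib (n+3) = fib (n+1) + fib (n+2) := by
      rw [show n+3 = n+1+2 by ring]; exact fib_add_two
    have e2 : fib (n+2) = fib n + fib (n+1) := fib_add_two
    rw [show n+1+2 = n+3 by ring, show n+1+1 = n+2 by ring]
    congr 1 <;> push_cast [e1, e2] <;> ring

lemma Qm_det (p : ℕ) : (Qm p).det = -1 := by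
  simp [Qm, Matrix.det_fin_two_of]

lemma prime_eq_of_dvd {p q : ℕ} (hp : p.Prime) (hq : q.Prime) (h : p ∣ q) : p = q :=
  (Nat.prime_dvd_prime_iff_eq hp hq).1 h

lemma key_lemma {p : ℕ} (hp : p.Prime) (hp2 : p ≠ 2) (hp3 : p ≠ 3) {m j : ℕ}
    (hm : 0 < m) (hN : p ∣ lucas (2*m) - 1) (hFj : p ∣ fib j) : 3 ∣ j := by
  haveI : Fact p.Prime := ⟨hp⟩
  rcases Nat.eq_zero_or_pos j with rfl | hj
  · exact dvd_zero 3
  obtain ⟨s, rfl⟩ : ∃ s, m = s + 1 := ⟨m - 1, by omega⟩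
  obtain ⟨i, rfl⟩ : ∃ i, j = i + 1 := ⟨j - 1, by omega⟩
  set Q := Qm p with hQ
  set X := Q ^ (2*(s+1)) with hX
  set a : ZMod p := ((fib (2*s+3) : ℕ) : ZMod p) with hA
  set b : ZMod p := ((fib (2*s+2) : ℕ) : ZMod p) with hB
  set c : ZMod p := ((fib (2*s+1) : ℕ) : ZMod p) with hC
  have hXval : X = !![a, b; b, c] := by
    rw [hX, show 2*(s+1) = (2*s+1)+1 by ring, Qm_pow,
      show 2*s+1+2 = 2*s+3 by ring, show 2*s+1+1 = 2*s+2 by ring]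
  -- trace condition : a + c = 1
  have hlucas : lucas (2*s+2) = fib (2*s+1) + fib (2*s+3) := by
    have := lucas_fib (2*s+1)
    rw [show 2*s+1+1 = 2*s+2 by ring, show 2*s+1+2 = 2*s+3 by ring] at this
    exact_mod_cast this
  have htr : a + c = 1 := by
    have h1 : ((lucas (2*s+2) : ℕ) : ZMod p) = 1 := by
      have hge : 1 ≤ lucas (2*(s+1)) := lucas_pos _
      obtain ⟨t, ht⟩ := hN
      have h2 : lucas (2*(s+1)) = 1 + p * t := by omega
      rw [show 2*(s+1) = 2*s+2 by ring] at h2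
      rw [h2]
      push_cast
      simp
    rw [hlucas] at h1
    push_cast at h1
    rw [hA, hC, add_comm]
    exact h1
  -- det condition
  have hdet : a * c - b * b = 1 := by
    have h1 : X.det = 1 := by
      rw [hX, Matrix.det_pow, Qm_det, show 2*(s+1) = 2*(s+1) from rfl,
        pow_mul]
      norm_num
    rw [hXval, Matrix.det_fin_two_of] at h1
    linear_combination h1
  -- X^2 = X - 1
  have hX2 : X * X = X - 1 := by
    rw [hXval, Matrix.mul_fin_two]
    ext u v
    fin_cases u <;> fin_cases v <;>
      simp [Matrix.sub_apply, Matrix.one_apply]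
    · linear_combination (-1 : ZMod p) * hdet + a * htr
    · linear_combination b * htr
    · linear_combination b * htr
    · linear_combination (-1 : ZMod p) * hdet + c * htr
  have hX3 : X ^ 3 = -1 := by
    rw [pow_succ, pow_two, hX2, sub_mul, one_mul, hX2]
    abel
  have hX6 : X ^ 6 = 1 := by
    rw [show (6:ℕ) = 3*2 from rfl, pow_mul, hX3]
    norm_num
  have hneg_ne : (-1 : Matrix (Fin 2) (Fin 2) (ZMod p)) ≠ 1 := by
    intro h
    have h00 := congrFun (congrFun h 0) 0
    simp [Matrix.neg_apply, Matrix.one_apply] at h00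
    have h2 : ((2 : ℕ) : ZMod p) = 0 := by push_cast; linear_combination -h00
    rw [ZMod.natCast_eq_zero_iff] at h2
    exact hp2 (prime_eq_of_dvd hp Nat.prime_two h2)
  have hX3ne : X ^ 3 ≠ 1 := by rw [hX3]; exact hneg_ne
  have hdvd6 : orderOf X ∣ 6 := orderOf_dvd_of_pow_eq_one hX6
  have hnd3 : ¬ orderOf X ∣ 3 := fun h => hX3ne (orderOf_dvd_iff_pow_eq_one.1 h)
  have key6 : ∀ d : ℕ, d ∣ 6 → ¬ d ∣ 3 → d = 2 ∨ d = 6 := by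
    intro d h1 h2
    have : d ≤ 6 := Nat.le_of_dvd (by norm_num) h1
    interval_cases d <;> omega
  have hordX : orderOf X = 6 := by
    rcases key6 _ hdvd6 hnd3 with h2 | h6
    · exfalso
      have hX2' : X ^ 2 = 1 := by
        have hpo := pow_orderOf_eq_one X
        rw [h2] at hpo
        exact hpo
      rw [pow_two, hX2] at hX2'
      have hXeq : X = 1 + 1 := sub_eq_iff_eq_add.mp hX2'
      have hent := hXval.symm.trans hXeq
      have h00 := congrFun (congrFun hent 0) 0
      have h11 := congrFun (congrFun hent 1) 1
      simp [Matrix.add_apply, Matrix.one_apply] at h00 h11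
      have h3 : ((3 : ℕ) : ZMod p) = 0 := by
        push_cast
        linear_combination htr - h00 - h11
      rw [ZMod.natCast_eq_zero_iff] at h3
      exact hp3 (prime_eq_of_dvd hp Nat.prime_three h3)
    · exact h6
  -- orderOf Q = gcd * 6, hence divisible by 3
  set d := orderOf Q with hdQ
  have hg : Nat.gcd d (2*(s+1)) ∣ d := Nat.gcd_dvd_left _ _
  have hdiv : d / Nat.gcd d (2*(s+1)) = 6 := by
    rw [hdQ, ← orderOf_pow' Q (show 2*(s+1) ≠ 0 by omega)]
    exact hordX
  have hd6 : d = Nat.gcd d (2*(s+1)) * 6 := Nat.eq_mul_of_div_eq_right hg hdiv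
  have h3d : 3 ∣ d := ⟨Nat.gcd d (2*(s+1)) * 2, by omega⟩
  -- Q^(i+1) is scalar
  have hz : ((fib (i+1) : ℕ) : ZMod p) = 0 := (ZMod.natCast_eq_zero_iff _ _).2 hFj
  have hQj : Q ^ (i+1) = ((fib i : ℕ) : ZMod p) • (1 : Matrix (Fin 2) (Fin 2) (ZMod p)) := by
    rw [hQ, Qm_pow, hz]
    have he : ((fib (i+2) : ℕ) : ZMod p) = ((fib i : ℕ) : ZMod p) := by
      rw [fib_add_two]; push_cast; rw [hz]; ring
    rw [he]
    ext u v
    fin_cases u <;> fin_cases v <;> simp [Matrix.smul_apply, Matrix.one_apply]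
  have hdetj : ((fib i : ℕ) : ZMod p) ^ 2 = (-1 : ZMod p) ^ (i+1) := by
    have h1 : (Q ^ (i+1)).det = (-1 : ZMod p) ^ (i+1) := by
      rw [hQ, Matrix.det_pow, Qm_det]
    rw [hQj, Matrix.det_smul, Matrix.det_one] at h1
    simpa using h1
  have he4 : ((fib i : ℕ) : ZMod p) ^ 4 = 1 := by
    rw [show (4:ℕ) = 2*2 from rfl, pow_mul, hdetj, ← pow_mul,
      show (i+1)*2 = 2*(i+1) by ring, pow_mul]
    norm_num
  have hQ4 : Q ^ (4*(i+1)) = 1 := by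
    rw [show 4*(i+1) = (i+1)*4 by ring, pow_mul, hQj, smul_pow, he4, one_pow, one_smul]
  have hd4 : d ∣ (i+1) * 4 := by
    rw [show (i+1)*4 = 4*(i+1) by ring]
    exact orderOf_dvd_of_pow_eq_one hQ4
  exact (show Nat.Coprime 3 4 by decide).dvd_of_dvd_mul_right (dvd_trans h3d hd4)

end KeyLemma
lemma list_prod_structure (L : List ℕ) (h : ∀ x ∈ L, x = 1 ∨ 2 ∣ x) :
    L.prod = 1 ∨ (∃ x ∈ L, L.prod = x ∧ 2 ∣ x) ∨ 4 ∣ L.prod := by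
  induction L with
  | nil => left; rfl
  | cons a tl ih =>
    have ha := h a (List.mem_cons_self)
    have htl := ih (fun x hx => h x (List.mem_cons_of_mem _ hx))
    rw [List.prod_cons]
    rcases ha with rfl | ha2
    · rw [one_mul]
      rcases htl with h1 | ⟨x, hx, hpx, h2x⟩ | h4
      · left; exact h1
      · right; left; exact ⟨x, List.mem_cons_of_mem _ hx, hpx, h2x⟩
      · right; right; exact h4
    · rcases htl with h1 | ⟨x, hx, hpx, h2x⟩ | h4
      · right; left
        exact ⟨a, List.mem_cons_self, by rw [h1, mul_one], ha2⟩
      · right; right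
        rw [hpx]
        obtain ⟨u, hu⟩ := ha2; obtain ⟨v, hv⟩ := h2x
        exact ⟨u * v, by rw [hu, hv]; ring⟩
      · right; right
        exact Dvd.dvd.mul_left h4 a

lemma cassini (n : ℕ) : (fib n : ℤ) * fib (n+2) = (fib (n+1) : ℤ)^2 - (-1)^n := by
  linear_combination -fibId n + (fib n : ℤ) * fibZ n

lemma forward_case (m : ℕ) (hodd : Odd m) (hm1 : m ≠ 1)
    (l : List ℕ) (hne : l ≠ [])
    (heq : ((l.map Nat.fib).prod : ℤ) - 1 = (lucas m : ℤ)^2) : False := by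
  have hm3 : 3 ≤ m := by obtain ⟨t, rfl⟩ := hodd; omega
  set N := lucas m ^ 2 + 1 with hN
  have heqN : (l.map Nat.fib).prod = N := by
    have h1 : ((l.map Nat.fib).prod : ℤ) = (lucas m : ℤ)^2 + 1 := by linarith
    rw [hN]
    exact_mod_cast h1
  have hL2m : lucas (2*m) = lucas m ^ 2 + 2 := by
    have h := lucas_two_mul m
    rw [Odd.neg_one_pow hodd] at h
    have h2 : (lucas (2*m) : ℤ) = (lucas m : ℤ)^2 + 2 := by linarith
    exact_mod_cast h2
  have hsub : lucas (2*m) - 1 = N := by rw [hL2m, hN]; omega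
  have claim1 : ∀ x ∈ l.map Nat.fib, x = 1 ∨ 2 ∣ x := by
    intro x hx
    obtain ⟨n, hn, rfl⟩ := List.mem_map.1 hx
    by_cases h1 : fib n = 1
    · left; exact h1
    right
    have hdvdN : fib n ∣ N := heqN ▸ List.dvd_prod hx
    have h3n : 3 ∣ n := by
      obtain ⟨p, hp, hpd⟩ := Nat.exists_prime_and_dvd h1
      have hpN : p ∣ N := dvd_trans hpd hdvdN
      by_cases hp2 : p = 2
      · exact (two_dvd_fib_iff n).1 (hp2 ▸ hpd)
      · have hp3 : p ≠ 3 := by rintro rfl; exact (not_three_dvd_N hodd) (hN ▸ hpN)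
        exact key_lemma hp hp2 hp3 (by omega : 0 < m) (hsub ▸ hpN) hpd
    exact (two_dvd_fib_iff n).2 h3n
  rcases list_prod_structure (l.map Nat.fib) claim1 with h1 | ⟨x, hx, hpx, h2x⟩ | h4
  · rw [heqN] at h1
    have := lucas_pos m
    have : 0 < lucas m ^ 2 := pow_pos this 2
    omega
  · obtain ⟨n, hn, rfl⟩ := List.mem_map.1 hx
    rw [heqN] at hpx
    have hlow : fib (2*m+1) < fib n := by
      have := sandwich1 (show 2 ≤ m by omega)
      omega
    have hhigh : fib n < fib (2*m+2) := by
      have := sandwich2 hm3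
      omega
    have hge : 2*m+2 ≤ n := by
      by_contra hc
      push_neg at hc
      have := Nat.fib_mono (show n ≤ 2*m+1 by omega)
      omega
    have := Nat.fib_mono hge
    omega
  · rw [heqN] at h4
    exact not_four_dvd_N m h4

lemma even_identity (u : ℕ) :
    (5 : ℤ) * fib (2*u+5) * fib (2*u+7) = (lucas (2*u+6) : ℤ)^2 + 1 := by
  have hc := cassini (2*u+5)
  rw [show 2*u+5+2 = 2*u+7 by ring, show 2*u+5+1 = 2*u+6 by ring] at hc
  have hodd : (-1 : ℤ)^(2*u+5) = -1 := Odd.neg_one_pow ⟨u+2, by ring⟩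
  have hs := lucas_sq (2*u+6)
  have heven : (-1 : ℤ)^(2*u+6) = 1 := Even.neg_one_pow ⟨u+3, by ring⟩
  rw [hodd] at hc
  rw [heven] at hs
  linear_combination 5 * hc - hs
theorem fib_prod_sub_one_eq_lucas_sq_iff (m : ℕ) :
    (∃ l : List ℕ, l ≠ [] ∧ l.Pairwise (· ≤ ·) ∧
        ((l.map Nat.fib).prod : ℤ) - 1 = (lucas m : ℤ) ^ 2) ↔
      (m = 1 ∨ Even m) := by
  constructor
  · rintro ⟨l, hne, hsort, heq⟩
    by_contra h
    push_neg at h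
    obtain ⟨h1, h2⟩ := h
    exact forward_case m (Nat.not_even_iff_odd.1 h2) h1 l hne heq
  · rintro (rfl | ⟨t, rfl⟩)
    · exact ⟨[3], by simp, by simp, by decide⟩
    · rcases t with _ | _ | _ | u
      · exact ⟨[5], by simp, by simp, by decide⟩
      · exact ⟨[1, 3, 5], by simp, by decide, by decide⟩
      · exact ⟨[3, 5, 5], by simp, by decide, by decide⟩
      · refine ⟨[5, 2*u+5, 2*u+7], by simp, ?_, ?_⟩
        · simp [List.pairwise_cons] <;> omega
        · have hid := even_identity u
          have h5 : ((fib 5 : ℕ) : ℤ) = 5 := by norm_num [show fib 5 = 5 from rfl]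
          simp only [List.map, List.prod_cons, List.prod_nil]
          rw [show u+3+(u+3) = 2*u+6 by ring]
          push_cast
          rw [h5]
          linear_combination hid
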